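/- The bondage number of the path P_n (n ≥ 2) equals 2 if n ≡ 1 (mod 3), and 1 otherwise. -/

import Mathlib

open SimpleGraph

variable {V : Type*}

/-- `S` is a dominating set of `G`: every vertex is in `S` or has a neighbor in `S`. -/
def SimpleGraph.IsDomSet (G : SimpleGraph V) (S : Finset V) : Prop :=
  ∀ v : V, v ∈ S ∨ ∃ u ∈ S, G.Adj u v

/-- The domination number of a finite graph. -/
noncomputable def SimpleGraph.domNum [Fintype V] (G : SimpleGraph V) : ℕ :=
  sInf {n | ∃ S : Finset V, S.card = n ∧ G.IsDomSet S}

/-- The bondage number: the minimum size of a set of edges of `G` whose removal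
increases the domination number. -/
noncomputable def SimpleGraph.bondageNum [Fintype V] (G : SimpleGraph V) : ℕ :=
  sInf {n | ∃ B : Finset (Sym2 V), B.card = n ∧ ↑B ⊆ G.edgeSet ∧
    G.domNum < (G.deleteEdges ↑B).domNum}


lemma domNum_le [Fintype V] (G : SimpleGraph V) {S : Finset V} (h : G.IsDomSet S) :
    G.domNum ≤ S.card := Nat.sInf_le ⟨S, rfl, h⟩

lemma le_domNum [Fintype V] (G : SimpleGraph V) (m : ℕ)
    (h : ∀ S : Finset V, G.IsDomSet S → m ≤ S.card) : m ≤ G.domNum := by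
  refine le_csInf ⟨Finset.univ.card, Finset.univ, rfl, fun v => Or.inl (Finset.mem_univ v)⟩ ?_
  rintro k ⟨S, rfl, hS⟩
  exact h S hS

lemma path_count {n : ℕ} (G : SimpleGraph (Fin n)) (hG : G ≤ pathGraph n)
    (S T : Finset (Fin n))
    (h : ∀ v ∈ T, ∃ u ∈ S, u = v ∨ G.Adj u v) :
    T.card ≤ 3 * S.card := by
  classical
  have hsub : T ⊆ S.biUnion (fun u => Finset.univ.filter (fun v => u = v ∨ G.Adj u v)) := by
    intro v hv
    obtain ⟨u, hu, hd⟩ := h v hv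
    exact Finset.mem_biUnion.2 ⟨u, hu, Finset.mem_filter.2 ⟨Finset.mem_univ v, hd⟩⟩
  have hcard : ∀ u : Fin n, (Finset.univ.filter (fun v => u = v ∨ G.Adj u v)).card ≤ 3 := by
    intro u
    have h1 : (Finset.univ.filter (fun v => u = v ∨ G.Adj u v)).card
        ≤ ({u.val - 1, u.val, u.val + 1} : Finset ℕ).card := by
      apply Finset.card_le_card_of_injOn Fin.val
      · intro v hv
        simp only [Finset.coe_filter, Finset.mem_coe, Finset.mem_filter, Set.mem_setOf_eq] at hv
        rcases hv.2 with h | h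
        · subst h; simp
        · have := pathGraph_adj.1 (hG h)
          simp only [Finset.coe_insert, Finset.coe_singleton, Set.mem_insert_iff, Set.mem_singleton_iff]
          omega
      · exact fun a _ b _ hab => Fin.ext hab
    refine h1.trans ?_
    refine (Finset.card_insert_le _ _).trans ?_
    simpa using Finset.card_insert_le u.val {u.val + 1}
  calc T.card ≤ _ := Finset.card_le_card hsub
    _ ≤ ∑ u ∈ S, (Finset.univ.filter (fun v => u = v ∨ G.Adj u v)).card :=
        Finset.card_biUnion_le
    _ ≤ ∑ _u ∈ S, 3 := Finset.sum_le_sum (fun u _ => hcard u)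
    _ = 3 * S.card := by rw [Finset.sum_const, smul_eq_mul, mul_comm]

def intSet (n l u : ℕ) : Finset (Fin n) :=
  Finset.univ.filter (fun v => l ≤ v.val ∧ v.val < u ∧
    ((v.val - l) % 3 = 1 ∨ (v.val + 1 = u ∧ (u - l) % 3 = 1)))

lemma countmod (m : ℕ) : ((Finset.range m).filter (fun v => v % 3 = 1)).card = (m + 1) / 3 := by
  induction m with
  | zero => simp
  | succ m ih =>
    rw [Finset.range_add_one, Finset.filter_insert]
    by_cases h : m % 3 = 1
    · rw [if_pos h, Finset.card_insert_of_notMem (by simp)]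
      omega
    · rw [if_neg h]; omega

lemma count01 (m : ℕ) (hm : 1 ≤ m) :
    ((Finset.range m).filter (fun v => v % 3 = 1 ∨ (v + 1 = m ∧ m % 3 = 1))).card
      = (m + 2) / 3 := by
  by_cases h : m % 3 = 1
  · have he : (Finset.range m).filter (fun v => v % 3 = 1 ∨ (v + 1 = m ∧ m % 3 = 1))
        = insert (m - 1) ((Finset.range m).filter (fun v => v % 3 = 1)) := by
      ext v
      simp only [Finset.mem_filter, Finset.mem_range, Finset.mem_insert]
      omega
    rw [he, Finset.card_insert_of_notMem (by simp only [Finset.mem_filter, Finset.mem_range]; omega),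
      countmod]
    omega
  · have he : (Finset.range m).filter (fun v => v % 3 = 1 ∨ (v + 1 = m ∧ m % 3 = 1))
        = (Finset.range m).filter (fun v => v % 3 = 1) := by
      apply Finset.filter_congr
      intro v _
      constructor
      · rintro (h1 | ⟨h1, h2⟩)
        · exact h1
        · exact absurd h2 h
      · exact Or.inl
    rw [he, countmod]
    omega

lemma intSet_card {n l u : ℕ} (hl : l < u) (hu : u ≤ n) :
    (intSet n l u).card = (u - l + 2) / 3 := by
  rw [← count01 (u - l) (by omega)]
  apply Finset.card_bij (fun v _ => v.val - l)
  · intro v hv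
    simp only [intSet, Finset.mem_filter, Finset.mem_univ, true_and] at hv
    simp only [Finset.mem_filter, Finset.mem_range]
    omega
  · intro a ha b hb hab
    simp only [intSet, Finset.mem_filter, Finset.mem_univ, true_and] at ha hb
    exact Fin.ext (by omega)
  · intro w hw
    simp only [Finset.mem_filter, Finset.mem_range] at hw
    refine ⟨⟨w + l, by omega⟩, ?_, by simp only [Fin.val_mk]; omega⟩
    simp only [intSet, Finset.mem_filter, Finset.mem_univ, true_and, Fin.val_mk]
    omega

lemma intSet_dom {n l u : ℕ} (hl : l < u) (hu : u ≤ n) (G : SimpleGraph (Fin n))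
    (hG : ∀ i j : Fin n, l ≤ i.val → j.val < u → i.val + 1 = j.val → G.Adj i j)
    (v : Fin n) (hv1 : l ≤ v.val) (hv2 : v.val < u) :
    v ∈ intSet n l u ∨ ∃ w ∈ intSet n l u, G.Adj w v := by
  have hmem : ∀ x : Fin n, l ≤ x.val → x.val < u →
      ((x.val - l) % 3 = 1 ∨ (x.val + 1 = u ∧ (u - l) % 3 = 1)) → x ∈ intSet n l u := by
    intro x h1 h2 h3
    simp only [intSet, Finset.mem_filter, Finset.mem_univ, true_and]
    exact ⟨h1, h2, h3⟩
  rcases (show (v.val - l) % 3 = 0 ∨ (v.val - l) % 3 = 1 ∨ (v.val - l) % 3 = 2 by omega)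
    with h0 | h1 | h2
  · by_cases hv3 : v.val + 1 < u
    · right
      refine ⟨⟨v.val + 1, by omega⟩,
        hmem _ (by simp only [Fin.val_mk]; omega) (by simp only [Fin.val_mk]; omega)
          (by left; simp only [Fin.val_mk]; omega), ?_⟩
      exact (hG v ⟨v.val + 1, by omega⟩ hv1 hv3 rfl).symm
    · left
      exact hmem v hv1 hv2 (Or.inr ⟨by omega, by omega⟩)
  · left
    exact hmem v hv1 hv2 (Or.inl h1)
  · right
    refine ⟨⟨v.val - 1, by omega⟩,
      hmem _ (by simp only [Fin.val_mk]; omega) (by simp only [Fin.val_mk]; omega)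
        (by left; simp only [Fin.val_mk]; omega), ?_⟩
    exact hG ⟨v.val - 1, by omega⟩ v (by simp only [Fin.val_mk]; omega) hv2
      (by simp only [Fin.val_mk]; omega)

lemma path_domNum {n : ℕ} (hn : 1 ≤ n) : (pathGraph n).domNum = (n + 2) / 3 := by
  apply le_antisymm
  · have hd : (pathGraph n).IsDomSet (intSet n 0 n) := by
      intro v
      exact intSet_dom (by omega) le_rfl _
        (fun i j _ _ hij => pathGraph_adj.2 (Or.inl hij)) v (Nat.zero_le _) v.isLt
    have h2 := domNum_le _ hd
    rwa [intSet_card (by omega) le_rfl, Nat.sub_zero] at h2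
  · apply le_domNum
    intro S hS
    have hc := path_count (pathGraph n) le_rfl S Finset.univ (fun v _ =>
      (hS v).elim (fun h => ⟨v, h, Or.inl rfl⟩) (fun ⟨u, hu, ha⟩ => ⟨u, hu, Or.inr ha⟩))
    rw [Finset.card_univ, Fintype.card_fin] at hc
    omega

lemma del_lb {n : ℕ} (G : SimpleGraph (Fin n)) (hG : G ≤ pathGraph n)
    (I : Finset (Fin n)) (hiso : ∀ v ∈ I, ∀ u : Fin n, ¬ G.Adj u v)
    {S : Finset (Fin n)} (hS : G.IsDomSet S) :
    I.card + (n - I.card + 2) / 3 ≤ S.card := by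
  classical
  have hIS : I ⊆ S := by
    intro v hv
    rcases hS v with h | ⟨u, _, hadj⟩
    · exact h
    · exact absurd hadj (hiso v hv u)
  have hcount : (Finset.univ \ I).card ≤ 3 * (S \ I).card := by
    apply path_count G hG
    intro v hv
    rcases hS v with h | ⟨u, hu, hadj⟩
    · exact ⟨v, Finset.mem_sdiff.2 ⟨h, (Finset.mem_sdiff.1 hv).2⟩, Or.inl rfl⟩
    · exact ⟨u, Finset.mem_sdiff.2 ⟨hu, fun hui => hiso u hui v hadj.symm⟩, Or.inr hadj⟩
  have h1 : (Finset.univ \ I).card = n - I.card := by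
    rw [Finset.card_sdiff_of_subset (Finset.subset_univ I), Finset.card_univ, Fintype.card_fin]
  have h2 : (S \ I).card = S.card - I.card := Finset.card_sdiff_of_subset hIS
  have h3 : I.card ≤ S.card := Finset.card_le_card hIS
  omega

lemma del_one_ub {n : ℕ} (hn : 2 ≤ n) (x y : Fin n) (hxy : x.val + 1 = y.val) :
    ((pathGraph n).deleteEdges (↑({s(x, y)} : Finset (Sym2 (Fin n))))).domNum
      ≤ (y.val + 2) / 3 + (n - y.val + 2) / 3 := by
  classical
  set a := y.val with ha
  have ha1 : 1 ≤ a := by omega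
  have ha2 : a < n := y.isLt
  set G' := (pathGraph n).deleteEdges (↑({s(x, y)} : Finset (Sym2 (Fin n)))) with hG'
  have hadj : ∀ i j : Fin n, i.val + 1 = j.val → ¬(i = x ∧ j = y) → G'.Adj i j := by
    intro i j hij hne
    rw [hG', deleteEdges_adj]
    refine ⟨pathGraph_adj.2 (Or.inl hij), ?_⟩
    simp only [Finset.coe_singleton, Set.mem_singleton_iff, Sym2.eq_iff]
    rintro (⟨rfl, rfl⟩ | ⟨rfl, rfl⟩)
    · exact hne ⟨rfl, rfl⟩
    · omega
  have hdom : G'.IsDomSet (intSet n 0 a ∪ intSet n a n) := by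
    intro v
    by_cases hv : v.val < a
    · rcases intSet_dom (show 0 < a by omega) (le_of_lt ha2) G'
        (fun i j _ hj hij => hadj i j hij (by rintro ⟨rfl, rfl⟩; omega))
        v (Nat.zero_le _) hv with h | ⟨w, hw, hwadj⟩
      · exact Or.inl (Finset.mem_union_left _ h)
      · exact Or.inr ⟨w, Finset.mem_union_left _ hw, hwadj⟩
    · rcases intSet_dom ha2 le_rfl G'
        (fun i j hi _ hij => hadj i j hij (by rintro ⟨rfl, rfl⟩; omega))
        v (by omega) v.isLt with h | ⟨w, hw, hwadj⟩
      · exact Or.inl (Finset.mem_union_right _ h)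
      · exact Or.inr ⟨w, Finset.mem_union_right _ hw, hwadj⟩
  refine (domNum_le _ hdom).trans ?_
  refine (Finset.card_union_le _ _).trans ?_
  rw [intSet_card (show 0 < a by omega) (le_of_lt ha2), intSet_card ha2 le_rfl, Nat.sub_zero]

theorem bondage_path (n : ℕ) (hn : 2 ≤ n) :
    (SimpleGraph.pathGraph n).bondageNum = if n % 3 = 1 then 2 else 1 := by
  classical
  have hdom : (pathGraph n).domNum = (n + 2) / 3 := path_domNum (by omega)
  rw [SimpleGraph.bondageNum]
  set bset := {k | ∃ B : Finset (Sym2 (Fin n)), B.card = k ∧ ↑B ⊆ (pathGraph n).edgeSet ∧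
    (pathGraph n).domNum < ((pathGraph n).deleteEdges ↑B).domNum} with hbset
  have h0 : 0 ∉ bset := by
    rintro ⟨B, hB, -, hlt⟩
    rw [Finset.card_eq_zero] at hB
    subst hB
    simp only [Finset.coe_empty, deleteEdges_empty] at hlt
    exact lt_irrefl _ hlt
  by_cases h1 : n % 3 = 1
  · -- n ≡ 1 mod 3 : answer 2
    rw [if_pos h1]
    have hn4 : 4 ≤ n := by omega
    obtain ⟨z0, hz0⟩ : ∃ z : Fin n, z.val = 0 := ⟨⟨0, by omega⟩, rfl⟩
    obtain ⟨z1, hz1⟩ : ∃ z : Fin n, z.val = 1 := ⟨⟨1, by omega⟩, rfl⟩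
    obtain ⟨z2, hz2⟩ : ∃ z : Fin n, z.val = 2 := ⟨⟨2, by omega⟩, rfl⟩
    set B : Finset (Sym2 (Fin n)) := {s(z0, z1), s(z1, z2)} with hBdef
    have hne : s(z0, z1) ≠ s(z1, z2) := by
      intro h
      rw [Sym2.eq_iff] at h
      simp only [Fin.ext_iff] at h
      omega
    have hBcard : B.card = 2 := by
      rw [hBdef, Finset.card_insert_of_notMem (by simpa using hne), Finset.card_singleton]
    have h2mem : 2 ∈ bset := by
      refine ⟨B, hBcard, ?_, ?_⟩
      · intro e he
        simp only [hBdef, Finset.coe_insert, Finset.coe_singleton, Set.mem_insert_iff,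
          Set.mem_singleton_iff] at he
        rcases he with rfl | rfl <;>
          exact (pathGraph n).mem_edgeSet.2 (pathGraph_adj.2 (Or.inl (by omega)))
      · rw [hdom]
        have hIcard : ({z0, z1} : Finset (Fin n)).card = 2 := by
          rw [Finset.card_insert_of_notMem
            (by simp only [Finset.mem_singleton, Fin.ext_iff, hz0, hz1]; omega),
            Finset.card_singleton]
        have hlb := le_domNum ((pathGraph n).deleteEdges ↑B) (2 + (n - 2 + 2) / 3) ?_
        · omega
        intro S hS
        have := del_lb _ (deleteEdges_le _) ({z0, z1} : Finset (Fin n)) ?_ hS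
        · omega
        intro v hv u hadj
        rw [deleteEdges_adj] at hadj
        obtain ⟨hpadj, hmem⟩ := hadj
        apply hmem
        simp only [Finset.mem_insert, Finset.mem_singleton] at hv
        have hp := pathGraph_adj.1 hpadj
        have hvv : v.val = 0 ∨ v.val = 1 := by
          rcases hv with rfl | rfl
          · left; exact hz0
          · right; exact hz1
        simp only [hBdef, Finset.coe_insert, Finset.coe_singleton, Set.mem_insert_iff,
          Set.mem_singleton_iff, Sym2.eq_iff, Fin.ext_iff]
        omega
    have h1not : 1 ∉ bset := by
      rintro ⟨B, hB1, hsub, hlt⟩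
      obtain ⟨e, rfl⟩ := Finset.card_eq_one.1 hB1
      obtain ⟨x, y, rfl⟩ : ∃ x y, e = s(x, y) := by
        induction e using Sym2.ind with
        | _ x y => exact ⟨x, y, rfl⟩
      have hadj : (pathGraph n).Adj x y :=
        (pathGraph n).mem_edgeSet.1 (hsub (by simp))
      have key : ∀ u v : Fin n, u.val + 1 = v.val →
          ¬ ((pathGraph n).domNum <
            ((pathGraph n).deleteEdges (↑({s(u, v)} : Finset (Sym2 (Fin n))))).domNum) := by
        intro u v huv
        have hub := del_one_ub hn u v huv
        have hv1 : 1 ≤ v.val := by omega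
        have hv2 : v.val < n := v.isLt
        rw [hdom]
        intro hcon
        have : (v.val + 2) / 3 + (n - v.val + 2) / 3 = (n + 2) / 3 := by omega
        omega
      rcases pathGraph_adj.1 hadj with h | h
      · exact key x y h hlt
      · rw [show s(x, y) = s(y, x) from Sym2.eq_swap] at hlt
        exact key y x h hlt
    have hle : sInf bset ≤ 2 := Nat.sInf_le h2mem
    have hmem := Nat.sInf_mem (⟨2, h2mem⟩ : bset.Nonempty)
    rcases (show sInf bset = 0 ∨ sInf bset = 1 ∨ sInf bset = 2 by omega) with h | h | h
    · rw [h] at hmem; exact absurd hmem h0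
    · rw [h] at hmem; exact absurd hmem h1not
    · exact h
  · -- n ≢ 1 mod 3 : answer 1
    rw [if_neg h1]
    obtain ⟨z0, hz0⟩ : ∃ z : Fin n, z.val = 0 := ⟨⟨0, by omega⟩, rfl⟩
    obtain ⟨z1, hz1⟩ : ∃ z : Fin n, z.val = 1 := ⟨⟨1, by omega⟩, rfl⟩
    have h1mem : 1 ∈ bset := by
      refine ⟨{s(z0, z1)}, Finset.card_singleton _, ?_, ?_⟩
      · intro e he
        simp only [Finset.coe_singleton, Set.mem_singleton_iff] at he
        subst he
        exact (pathGraph n).mem_edgeSet.2 (pathGraph_adj.2 (Or.inl (by omega)))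
      · rw [hdom]
        have hlb := le_domNum ((pathGraph n).deleteEdges ↑({s(z0, z1)} : Finset (Sym2 (Fin n))))
          (1 + (n - 1 + 2) / 3) ?_
        · omega
        intro S hS
        have := del_lb _ (deleteEdges_le _) ({z0} : Finset (Fin n)) ?_ hS
        · simp only [Finset.card_singleton] at this
          omega
        intro v hv u hadj
        rw [deleteEdges_adj] at hadj
        obtain ⟨hpadj, hmem⟩ := hadj
        apply hmem
        simp only [Finset.mem_singleton] at hv
        subst hv
        have hp := pathGraph_adj.1 hpadj
        simp only [Finset.coe_singleton, Set.mem_singleton_iff, Sym2.eq_iff, Fin.ext_iff,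
          and_true, true_and, or_true, true_or]
        all_goals omega
    have hle : sInf bset ≤ 1 := Nat.sInf_le h1mem
    have hmem := Nat.sInf_mem (⟨1, h1mem⟩ : bset.Nonempty)
    rcases (show sInf bset = 0 ∨ sInf bset = 1 by omega) with h | h
    · rw [h] at hmem; exact absurd hmem h0
    · exact h
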